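/- arXiv:1109.0187 — 5 statements merged into one kernel-verified Lean document; each statement's English description precedes it below -/
import Mathlib

section
/- Let A and B be proper open convex sets in R^n and R^m with Hilbert distances d_A, d_B, and let d_{A×B} be the Hilbert distance of the product A × B ⊆ R^{n+m}. Then the identity map from (A × B, d_{A×B}) to the product metric space (A, d_A) × (B, d_B) equipped with the max-distance is 2-bi-Lipschitz; more precisely, max(d_A(p_A,q_A), d_B(p_B,q_B)) ≤ d_{A×B}(p,q) ≤ d_A(p_A,q_A) + d_B(p_B,q_B) for all p = (p_A,p_B), q = (q_A,q_B) in A × B. -/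
open scoped ENNReal
open MeasureTheory

noncomputable section

/-- Exit time of the open convex set `A` from `p` in direction `v`:
`sup {t > 0 : p + t • v ∈ A}` in `ℝ≥0∞` (so it is `∞` when the ray stays in `A`). -/
def exitTime {V : Type*} [AddCommGroup V] [Module ℝ V] (A : Set V) (p v : V) : ℝ≥0∞ :=
  ⨆ t ∈ {t : ℝ | 0 < t ∧ p + t • v ∈ A}, ENNReal.ofReal t

/-- The Hilbert–Finsler norm `F_A(p,v) = (1/2)(1/t⁺ + 1/t⁻)`, with `1/∞ = 0`. -/
def finsler {V : Type*} [AddCommGroup V] [Module ℝ V] (A : Set V) (p v : V) : ℝ :=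
  ((exitTime A p v)⁻¹ + (exitTime A p (-v))⁻¹).toReal / 2

/-- `A` contains no affine line (properness). -/
def LineFree {V : Type*} [AddCommGroup V] [Module ℝ V] (A : Set V) : Prop :=
  ¬ ∃ p v : V, v ≠ 0 ∧ ∀ t : ℝ, p + t • v ∈ A

open Classical in
/-- The Hilbert distance of `A`, written via the exit times `t⁺ = exitTime A p (q-p)`,
`t⁻ = exitTime A p (p-q)`: the cross-ratio of `(a,p,q,b)` equals
`(t⁺/(t⁺-1)) · ((t⁻+1)/t⁻)`, factors involving a boundary point at infinity being `1`. -/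
def hilbertDist {V : Type*} [AddCommGroup V] [Module ℝ V] (A : Set V) (p q : V) : ℝ :=
  if p = q then 0 else
    (1 / 2) * Real.log
      ((if exitTime A p (q - p) = ∞ then 1 else
          (exitTime A p (q - p)).toReal / ((exitTime A p (q - p)).toReal - 1)) *
       (if exitTime A p (p - q) = ∞ then 1 else
          ((exitTime A p (p - q)).toReal + 1) / (exitTime A p (p - q)).toReal))

/-- Open ball of the Hilbert distance. -/
def hilbertBall {V : Type*} [AddCommGroup V] [Module ℝ V] (A : Set V) (p : V) (R : ℝ) :
    Set V :=
  {q ∈ A | hilbertDist A p q < R}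


/-! ### Auxiliary lemmas -/

lemma le_exitTime {V : Type*} [AddCommGroup V] [Module ℝ V] {A : Set V} {p v : V} {t : ℝ}
    (ht : 0 < t) (h : p + t • v ∈ A) : ENNReal.ofReal t ≤ exitTime A p v :=
  le_iSup₂ (f := fun t (_ : t ∈ {t : ℝ | 0 < t ∧ p + t • v ∈ A}) => ENNReal.ofReal t) t ⟨ht, h⟩

lemma exitTime_lt {V : Type*} [AddCommGroup V] [Module ℝ V] [TopologicalSpace V]
    [ContinuousAdd V] [ContinuousSMul ℝ V] {A : Set V} (hA : IsOpen A)
    {p v : V} {t₀ : ℝ} (ht₀ : 0 ≤ t₀) (h : p + t₀ • v ∈ A) :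
    ENNReal.ofReal t₀ < exitTime A p v := by
  have hc : Continuous fun t : ℝ => p + t • v := by continuity
  have hnhds : {s : ℝ | p + s • v ∈ A} ∈ nhds t₀ :=
    (hA.preimage hc).mem_nhds h
  rcases Metric.mem_nhds_iff.1 hnhds with ⟨ε, hε, hball⟩
  have hmem : p + (t₀ + ε/2) • v ∈ A := by
    apply hball
    simp only [Metric.mem_ball, Real.dist_eq]
    rw [abs_of_nonneg (by linarith)]
    linarith
  calc ENNReal.ofReal t₀ < ENNReal.ofReal (t₀ + ε/2) := by
        rw [ENNReal.ofReal_lt_ofReal_iff (by linarith)]; linarith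
    _ ≤ exitTime A p v := le_exitTime (by linarith) hmem

lemma exitTime_zero' {V : Type*} [AddCommGroup V] [Module ℝ V] [TopologicalSpace V]
    [ContinuousAdd V] [ContinuousSMul ℝ V] {A : Set V} (hA : IsOpen A)
    {p : V} (hp : p ∈ A) : exitTime A p 0 = ∞ := by
  by_contra h
  have h1 := exitTime_lt (t₀ := (exitTime A p 0).toReal) (v := (0 : V)) hA
    ENNReal.toReal_nonneg (by simpa using hp)
  rw [ENNReal.ofReal_toReal h] at h1
  exact lt_irrefl _ h1

lemma iSup_ofReal_inter {S T : Set ℝ}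
    (hS : ∀ ⦃t s : ℝ⦄, t ∈ S → 0 < s → s ≤ t → s ∈ S)
    (hT : ∀ ⦃t s : ℝ⦄, t ∈ T → 0 < s → s ≤ t → s ∈ T) :
    (⨆ t ∈ S ∩ T, ENNReal.ofReal t)
      = min (⨆ t ∈ S, ENNReal.ofReal t) (⨆ t ∈ T, ENNReal.ofReal t) := by
  apply le_antisymm
  · exact le_min (biSup_mono fun t ht => ht.1) (biSup_mono fun t ht => ht.2)
  · refine ENNReal.le_of_forall_nnreal_lt fun r hr => ?_
    rw [lt_min_iff] at hr
    obtain ⟨hrS, hrT⟩ := hr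
    have h1 : ∃ t ∈ S, (r : ℝ≥0∞) < ENNReal.ofReal t := by
      by_contra hc; push_neg at hc
      exact absurd (iSup₂_le fun t ht => hc t ht) (not_le.2 hrS)
    have h2 : ∃ t ∈ T, (r : ℝ≥0∞) < ENNReal.ofReal t := by
      by_contra hc; push_neg at hc
      exact absurd (iSup₂_le fun t ht => hc t ht) (not_le.2 hrT)
    obtain ⟨tS, htS, hrs⟩ := h1
    obtain ⟨tT, htT, hrt⟩ := h2
    have hrs' : (r : ℝ) < tS := by
      rw [ENNReal.lt_ofReal_iff_toReal_lt (by simp)] at hrs; simpa using hrs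
    have hrt' : (r : ℝ) < tT := by
      rw [ENNReal.lt_ofReal_iff_toReal_lt (by simp)] at hrt; simpa using hrt
    set c := min tS tT with hc
    have hc0 : 0 < c := lt_min (lt_of_le_of_lt r.coe_nonneg hrs') (lt_of_le_of_lt r.coe_nonneg hrt')
    have hcS : c ∈ S := hS htS hc0 (min_le_left _ _)
    have hcT : c ∈ T := hT htT hc0 (min_le_right _ _)
    calc (r : ℝ≥0∞) = ENNReal.ofReal (r : ℝ) := (ENNReal.ofReal_coe_nnreal).symm
      _ ≤ ENNReal.ofReal c := ENNReal.ofReal_le_ofReal (le_min hrs'.le hrt'.le)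
      _ ≤ ⨆ t ∈ S ∩ T, ENNReal.ofReal t :=
          le_iSup₂ (f := fun t (_ : t ∈ S ∩ T) => ENNReal.ofReal t) c ⟨hcS, hcT⟩

lemma exitTime_downward {V : Type*} [AddCommGroup V] [Module ℝ V] {A : Set V}
    (hAc : Convex ℝ A) {p v : V} (hp : p ∈ A) :
    ∀ ⦃t s : ℝ⦄, t ∈ {t : ℝ | 0 < t ∧ p + t • v ∈ A} → 0 < s → s ≤ t →
      s ∈ {t : ℝ | 0 < t ∧ p + t • v ∈ A} := by
  intro t s ht hs hst
  refine ⟨hs, ?_⟩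
  have hkey : (1 - s/t) • p + (s/t) • (p + t • v) = p + (s/t*t) • v := by module
  rw [div_mul_cancel₀ s ht.1.ne'] at hkey
  rw [← hkey]
  exact hAc hp ht.2 (by rw [sub_nonneg]; exact div_le_one_of_le₀ hst ht.1.le)
    (div_nonneg hs.le ht.1.le) (by ring)

lemma exitTime_prod {V W : Type*} [AddCommGroup V] [Module ℝ V] [AddCommGroup W] [Module ℝ W]
    {A : Set V} {B : Set W} (hAc : Convex ℝ A) (hBc : Convex ℝ B)
    {p : V × W} (hp1 : p.1 ∈ A) (hp2 : p.2 ∈ B) (v : V × W) :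
    exitTime (A ×ˢ B) p v = min (exitTime A p.1 v.1) (exitTime B p.2 v.2) := by
  have hset : {t : ℝ | 0 < t ∧ p + t • v ∈ A ×ˢ B}
      = {t : ℝ | 0 < t ∧ p.1 + t • v.1 ∈ A} ∩ {t : ℝ | 0 < t ∧ p.2 + t • v.2 ∈ B} := by
    ext t
    simp only [Set.mem_setOf_eq, Set.mem_inter_iff, Set.mem_prod,
      Prod.fst_add, Prod.snd_add, Prod.smul_fst, Prod.smul_snd]
    tauto
  unfold exitTime
  rw [hset]
  exact iSup_ofReal_inter (exitTime_downward hAc hp1) (exitTime_downward hBc hp2)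

/-- The two cross-ratio factors. -/
def Gp (e : ℝ≥0∞) : ℝ := if e = ∞ then 1 else e.toReal / (e.toReal - 1)
def Gm (e : ℝ≥0∞) : ℝ := if e = ∞ then 1 else (e.toReal + 1) / e.toReal

lemma one_lt_toReal' {e : ℝ≥0∞} (he : 1 < e) (hne : e ≠ ∞) : 1 < e.toReal := by
  have := (ENNReal.toReal_lt_toReal (by simp) hne).2 he
  simpa using this

lemma one_le_Gp {e : ℝ≥0∞} (he : 1 < e) : 1 ≤ Gp e := by
  unfold Gp; split
  · exact le_refl _
  · next hne =>
    have h1 : 1 < e.toReal := one_lt_toReal' he hne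
    rw [le_div_iff₀ (by linarith)]; linarith

lemma one_le_Gm {e : ℝ≥0∞} (he : 0 < e) : 1 ≤ Gm e := by
  unfold Gm; split
  · exact le_refl _
  · next hne =>
    have h1 : 0 < e.toReal := ENNReal.toReal_pos he.ne' hne
    rw [le_div_iff₀ h1]; linarith

lemma Gp_anti {e f : ℝ≥0∞} (he : 1 < e) (hef : e ≤ f) : Gp f ≤ Gp e := by
  by_cases hf : f = ∞
  · rw [hf]; simp only [Gp, if_pos rfl]; exact one_le_Gp he
  · have hne : e ≠ ∞ := fun h => hf (top_le_iff.1 (h ▸ hef))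
    have h1 : 1 < e.toReal := one_lt_toReal' he hne
    have h2 : e.toReal ≤ f.toReal := ENNReal.toReal_le_toReal hne hf |>.2 hef
    simp only [Gp, if_neg hf, if_neg hne]
    rw [div_le_div_iff₀ (by linarith) (by linarith)]
    nlinarith

lemma Gm_anti {e f : ℝ≥0∞} (he : 0 < e) (hef : e ≤ f) : Gm f ≤ Gm e := by
  by_cases hf : f = ∞
  · rw [hf]; simp only [Gm, if_pos rfl]; exact one_le_Gm he
  · have hne : e ≠ ∞ := fun h => hf (top_le_iff.1 (h ▸ hef))
    have h1 : 0 < e.toReal := ENNReal.toReal_pos he.ne' hne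
    have h2 : e.toReal ≤ f.toReal := ENNReal.toReal_le_toReal hne hf |>.2 hef
    simp only [Gm, if_neg hf, if_neg hne]
    rw [div_le_div_iff₀ (by linarith) h1]
    nlinarith

lemma Gp_min {e f : ℝ≥0∞} (he : 1 < e) (hf : 1 < f) :
    Gp (min e f) = max (Gp e) (Gp f) := by
  rcases le_total e f with h | h
  · rw [min_eq_left h, max_eq_left (Gp_anti he h)]
  · rw [min_eq_right h, max_eq_right (Gp_anti hf h)]

lemma Gm_min {e f : ℝ≥0∞} (he : 0 < e) (hf : 0 < f) :
    Gm (min e f) = max (Gm e) (Gm f) := by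
  rcases le_total e f with h | h
  · rw [min_eq_left h, max_eq_left (Gm_anti he h)]
  · rw [min_eq_right h, max_eq_right (Gm_anti hf h)]

lemma real_log_ineq {a b c d : ℝ} (ha : 1 ≤ a) (hb : 1 ≤ b) (hc : 1 ≤ c) (hd : 1 ≤ d) :
    max ((1/2) * Real.log (a*b)) ((1/2) * Real.log (c*d))
      ≤ (1/2) * Real.log (max a c * max b d) ∧
    (1/2) * Real.log (max a c * max b d)
      ≤ (1/2) * Real.log (a*b) + (1/2) * Real.log (c*d) := by
  have ha0 : 0 < a := lt_of_lt_of_le one_pos ha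
  have hb0 : 0 < b := lt_of_lt_of_le one_pos hb
  have hc0 : 0 < c := lt_of_lt_of_le one_pos hc
  have hd0 : 0 < d := lt_of_lt_of_le one_pos hd
  constructor
  · apply max_le
    · have h1 : a*b ≤ max a c * max b d :=
        mul_le_mul (le_max_left _ _) (le_max_left _ _) hb0.le (by positivity)
      have := Real.log_le_log (by positivity) h1
      linarith
    · have h1 : c*d ≤ max a c * max b d :=
        mul_le_mul (le_max_right _ _) (le_max_right _ _) hd0.le (by positivity)
      have := Real.log_le_log (by positivity) h1
      linarith
  · have h2 : max a c ≤ a * c :=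
      max_le (le_mul_of_one_le_right ha0.le hc) (le_mul_of_one_le_left hc0.le ha)
    have h3 : max b d ≤ b * d :=
      max_le (le_mul_of_one_le_right hb0.le hd) (le_mul_of_one_le_left hd0.le hb)
    have h4 : max a c * max b d ≤ (a*b)*(c*d) := by
      calc max a c * max b d ≤ (a*c)*(b*d) :=
            mul_le_mul h2 h3 (by positivity) (by positivity)
        _ = (a*b)*(c*d) := by ring
    have h5 := Real.log_le_log (by positivity) h4
    have h6 : Real.log (a*b*(c*d)) = Real.log (a*b) + Real.log (c*d) :=
      Real.log_mul (by positivity) (by positivity)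
    linarith

lemma hilbertDist_eq_G {V : Type*} [AddCommGroup V] [Module ℝ V] [TopologicalSpace V]
    [ContinuousAdd V] [ContinuousSMul ℝ V] {A : Set V} (hA : IsOpen A)
    {p : V} (hp : p ∈ A) (q : V) :
    hilbertDist A p q
      = (1/2) * Real.log (Gp (exitTime A p (q - p)) * Gm (exitTime A p (p - q))) := by
  unfold hilbertDist Gp Gm
  split
  · next h =>
    subst h
    simp [exitTime_zero' hA hp]
  · rfl

/-- for proper open convex `A ⊆ ℝⁿ`, `B ⊆ ℝᵐ`,
`max(d_A(p₁,q₁), d_B(p₂,q₂)) ≤ d_{A×B}(p,q) ≤ d_A(p₁,q₁) + d_B(p₂,q₂)`;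
in particular the identity is 2-bi-Lipschitz onto the max-distance product. -/
theorem hilbertDist_prod {n m : ℕ}
    (A : Set (EuclideanSpace ℝ (Fin n))) (B : Set (EuclideanSpace ℝ (Fin m)))
    (hAo : IsOpen A) (hAc : Convex ℝ A) (hAl : LineFree A)
    (hBo : IsOpen B) (hBc : Convex ℝ B) (hBl : LineFree B)
    (p q : EuclideanSpace ℝ (Fin n) × EuclideanSpace ℝ (Fin m))
    (hp : p ∈ A ×ˢ B) (hq : q ∈ A ×ˢ B) :
    max (hilbertDist A p.1 q.1) (hilbertDist B p.2 q.2) ≤ hilbertDist (A ×ˢ B) p q ∧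
      hilbertDist (A ×ˢ B) p q ≤ hilbertDist A p.1 q.1 + hilbertDist B p.2 q.2 := by
  obtain ⟨hp1, hp2⟩ := hp
  obtain ⟨hq1, hq2⟩ := hq
  -- exit time facts
  have hA1 : 1 < exitTime A p.1 (q.1 - p.1) := by
    have := exitTime_lt (t₀ := 1) (p := p.1) (v := q.1 - p.1) hAo zero_le_one (by simpa using hq1)
    simpa using this
  have hA2 : 0 < exitTime A p.1 (p.1 - q.1) := by
    have := exitTime_lt (t₀ := 0) (v := p.1 - q.1) hAo le_rfl (by simpa using hp1)
    simpa using this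
  have hB1 : 1 < exitTime B p.2 (q.2 - p.2) := by
    have := exitTime_lt (t₀ := 1) (p := p.2) (v := q.2 - p.2) hBo zero_le_one (by simpa using hq2)
    simpa using this
  have hB2 : 0 < exitTime B p.2 (p.2 - q.2) := by
    have := exitTime_lt (t₀ := 0) (v := p.2 - q.2) hBo le_rfl (by simpa using hp2)
    simpa using this
  have hDA := hilbertDist_eq_G hAo hp1 q.1
  have hDB := hilbertDist_eq_G hBo hp2 q.2
  have hDAB := hilbertDist_eq_G (hAo.prod hBo) (Set.mk_mem_prod hp1 hp2) q
  have hTp : exitTime (A ×ˢ B) p (q - p)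
      = min (exitTime A p.1 (q.1 - p.1)) (exitTime B p.2 (q.2 - p.2)) := by
    simpa using exitTime_prod hAc hBc hp1 hp2 (q - p)
  have hTm : exitTime (A ×ˢ B) p (p - q)
      = min (exitTime A p.1 (p.1 - q.1)) (exitTime B p.2 (p.2 - q.2)) := by
    simpa using exitTime_prod hAc hBc hp1 hp2 (p - q)
  rw [hDA, hDB, hDAB, hTp, hTm, Gp_min hA1 hB1, Gm_min hA2 hB2]
  exact real_log_ineq (one_le_Gp hA1) (one_le_Gm hA2) (one_le_Gp hB1) (one_le_Gm hB2)
end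
end

section
/- For proper open convex sets A ⊆ R^n and B ⊆ R^m, for every p = (p_A, p_B) ∈ A × B, every R > 0 and every ε ∈ (0,1), the product of Hilbert balls B_A(p_A, εR) × B_B(p_B, (1−ε)R) is contained in the Hilbert ball B_{A×B}(p, R). -/
open scoped ENNReal
open MeasureTheory

noncomputable section

namespace HilbertAux

open Classical in
def Ff (e : ℝ≥0∞) : ℝ := if e = ∞ then 1 else e.toReal / (e.toReal - 1)

open Classical in
def Gg (e : ℝ≥0∞) : ℝ := if e = ∞ then 1 else (e.toReal + 1) / e.toReal

lemma one_le_Ff {e : ℝ≥0∞} (he : 1 < e) : 1 ≤ Ff e := by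
  unfold Ff
  split_ifs with h
  · exact le_rfl
  · have h1 : 1 < e.toReal := by
      rw [show (1:ℝ) = (1:ℝ≥0∞).toReal by simp]
      exact (ENNReal.toReal_lt_toReal (by simp) h).mpr he
    rw [le_div_iff₀ (by linarith)]
    linarith

lemma one_le_Gg {e : ℝ≥0∞} (he : 0 < e) : 1 ≤ Gg e := by
  unfold Gg
  split_ifs with h
  · exact le_rfl
  · have h1 : 0 < e.toReal := ENNReal.toReal_pos he.ne' h
    rw [le_div_iff₀ h1]
    linarith

lemma Ff_min_le {a b : ℝ≥0∞} (ha : 1 < a) (hb : 1 < b) : Ff (min a b) ≤ Ff a * Ff b := by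
  rcases le_total a b with h | h
  · rw [min_eq_left h]
    exact le_mul_of_one_le_right (by linarith [one_le_Ff ha]) (one_le_Ff hb)
  · rw [min_eq_right h]
    exact le_mul_of_one_le_left (by linarith [one_le_Ff hb]) (one_le_Ff ha)

lemma Gg_min_le {a b : ℝ≥0∞} (ha : 0 < a) (hb : 0 < b) : Gg (min a b) ≤ Gg a * Gg b := by
  rcases le_total a b with h | h
  · rw [min_eq_left h]
    exact le_mul_of_one_le_right (by linarith [one_le_Gg ha]) (one_le_Gg hb)
  · rw [min_eq_right h]
    exact le_mul_of_one_le_left (by linarith [one_le_Gg hb]) (one_le_Gg ha)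

variable {V : Type*} [AddCommGroup V] [Module ℝ V]

lemma mem_of_le {A : Set V} (hA : Convex ℝ A) {p v : V} (hp : p ∈ A)
    {s t : ℝ} (hs : 0 < s) (hst : s ≤ t) (ht : p + t • v ∈ A) : p + s • v ∈ A := by
  have ht0 : 0 < t := hs.trans_le hst
  have hc0 : (0:ℝ) ≤ s / t := le_of_lt (div_pos hs ht0)
  have hc1 : s / t ≤ 1 := (div_le_one ht0).mpr hst
  have hmem := hA (a := 1 - s/t) (b := s/t) hp ht (by linarith) hc0 (by ring)
  have : (1 - s / t) • p + (s / t) • (p + t • v) = p + s • v := by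
    rw [smul_add, sub_smul, one_smul, smul_smul, div_mul_cancel₀ _ ht0.ne']
    abel
  rwa [this] at hmem

lemma le_exitTime {A : Set V} {p v : V} {t : ℝ} (ht : 0 < t ∧ p + t • v ∈ A) :
    ENNReal.ofReal t ≤ exitTime A p v :=
  le_iSup₂ (f := fun (t : ℝ) (_ : t ∈ {t : ℝ | 0 < t ∧ p + t • v ∈ A}) => ENNReal.ofReal t) t ht

lemma exitTime_zero {A : Set V} {p : V} (hp : p ∈ A) : exitTime A p 0 = ∞ := by
  apply ENNReal.eq_top_of_forall_nnreal_le
  intro r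
  calc (r : ℝ≥0∞) = ENNReal.ofReal r := ENNReal.ofReal_coe_nnreal.symm
    _ ≤ ENNReal.ofReal ((r:ℝ) + 1) := ENNReal.ofReal_le_ofReal (by linarith)
    _ ≤ exitTime A p 0 := le_exitTime ⟨by positivity, by simpa using hp⟩

lemma exitTime_prod {W : Type*} [AddCommGroup W] [Module ℝ W]
    {A : Set V} {B : Set W} (hA : Convex ℝ A) (hB : Convex ℝ B)
    {p : V × W} (hp1 : p.1 ∈ A) (hp2 : p.2 ∈ B) (v : V × W) :
    exitTime (A ×ˢ B) p v = min (exitTime A p.1 v.1) (exitTime B p.2 v.2) := by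
  apply le_antisymm
  · refine le_min (iSup₂_le fun t ht => ?_) (iSup₂_le fun t ht => ?_)
    · exact le_exitTime ⟨ht.1, by simpa using ht.2.1⟩
    · exact le_exitTime ⟨ht.1, by simpa using ht.2.2⟩
  · by_contra h
    push_neg at h
    obtain ⟨r, _, hr1, hr2⟩ := ENNReal.lt_iff_exists_real_btwn.mp h
    have hrpos : 0 < r := ENNReal.ofReal_pos.mp (lt_of_le_of_lt zero_le hr1)
    have hA' : p.1 + r • v.1 ∈ A := by
      have := lt_of_lt_of_le hr2 (min_le_left _ _)
      rw [exitTime, lt_iSup_iff] at this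
      obtain ⟨t, hlt⟩ := this
      rw [lt_iSup_iff] at hlt
      obtain ⟨ht, hlt⟩ := hlt
      exact mem_of_le hA hp1 hrpos ((ENNReal.ofReal_lt_ofReal_iff ht.1).mp hlt).le ht.2
    have hB' : p.2 + r • v.2 ∈ B := by
      have := lt_of_lt_of_le hr2 (min_le_right _ _)
      rw [exitTime, lt_iSup_iff] at this
      obtain ⟨t, hlt⟩ := this
      rw [lt_iSup_iff] at hlt
      obtain ⟨ht, hlt⟩ := hlt
      exact mem_of_le hB hp2 hrpos ((ENNReal.ofReal_lt_ofReal_iff ht.1).mp hlt).le ht.2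
    exact absurd (le_exitTime ⟨hrpos, Set.mk_mem_prod (by exact hA') (by exact hB')⟩)
      (not_le.mpr hr1)

variable [TopologicalSpace V] [ContinuousAdd V] [ContinuousSMul ℝ V]

lemma one_lt_exitTime {A : Set V} (hAo : IsOpen A) {p v : V} (hv : p + v ∈ A) :
    1 < exitTime A p v := by
  have hf : Continuous fun t : ℝ => p + t • v := continuous_const.add (continuous_id.smul continuous_const)
  have h1 : (1:ℝ) ∈ (fun t : ℝ => p + t • v) ⁻¹' A := by simp [hv]
  obtain ⟨ε, hε, hball⟩ := Metric.isOpen_iff.mp (hAo.preimage hf) 1 h1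
  have hmem : p + (1 + ε/2) • v ∈ A := hball (by simp [Real.dist_eq, abs_of_pos, hε, half_lt_self hε])
  calc (1:ℝ≥0∞) < ENNReal.ofReal (1 + ε/2) := ENNReal.one_lt_ofReal.mpr (by linarith)
    _ ≤ exitTime A p v := le_exitTime ⟨by linarith, hmem⟩

lemma pos_exitTime {A : Set V} (hAo : IsOpen A) {p : V} (hp : p ∈ A) (v : V) :
    0 < exitTime A p v := by
  have hf : Continuous fun t : ℝ => p + t • v := continuous_const.add (continuous_id.smul continuous_const)
  have h0 : (0:ℝ) ∈ (fun t : ℝ => p + t • v) ⁻¹' A := by simp [hp]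
  obtain ⟨ε, hε, hball⟩ := Metric.isOpen_iff.mp (hAo.preimage hf) 0 h0
  have hmem : p + (ε/2) • v ∈ A := hball (by rw [Metric.mem_ball, Real.dist_eq, sub_zero, abs_of_pos (half_pos hε)]; linarith)
  calc (0:ℝ≥0∞) < ENNReal.ofReal (ε/2) := ENNReal.ofReal_pos.mpr (half_pos hε)
    _ ≤ exitTime A p v := le_exitTime ⟨half_pos hε, hmem⟩

open Classical in
lemma hilbertDist_def {V : Type*} [AddCommGroup V] [Module ℝ V] (A : Set V) (p q : V) :
    hilbertDist A p q = if p = q then 0 else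
      (1/2) * Real.log (Ff (exitTime A p (q - p)) * Gg (exitTime A p (p - q))) := by
  rw [hilbertDist, Ff, Gg]

lemma hilbertDist_eq {V : Type*} [AddCommGroup V] [Module ℝ V] {A : Set V} {p : V}
    (hp : p ∈ A) (q : V) :
    hilbertDist A p q
      = (1/2) * Real.log (Ff (exitTime A p (q - p)) * Gg (exitTime A p (p - q))) := by
  rw [hilbertDist_def]
  split_ifs with h
  · subst h
    simp [exitTime_zero hp, Ff, Gg]
  · rfl

lemma hilbertDist_prod_le {V W : Type*} [AddCommGroup V] [Module ℝ V]
    [TopologicalSpace V] [ContinuousAdd V] [ContinuousSMul ℝ V]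
    [AddCommGroup W] [Module ℝ W]
    [TopologicalSpace W] [ContinuousAdd W] [ContinuousSMul ℝ W]
    {A : Set V} {B : Set W} (hAo : IsOpen A) (hAc : Convex ℝ A)
    (hBo : IsOpen B) (hBc : Convex ℝ B) {p q : V × W}
    (hp : p ∈ A ×ˢ B) (hq : q ∈ A ×ˢ B) :
    hilbertDist (A ×ˢ B) p q ≤ hilbertDist A p.1 q.1 + hilbertDist B p.2 q.2 := by
  have hp1 : p.1 ∈ A := hp.1
  have hp2 : p.2 ∈ B := hp.2
  set e1 := exitTime A p.1 (q.1 - p.1) with he1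
  set f1 := exitTime A p.1 (p.1 - q.1) with hf1
  set e2 := exitTime B p.2 (q.2 - p.2) with he2
  set f2 := exitTime B p.2 (p.2 - q.2) with hf2
  have h1 : 1 < e1 := one_lt_exitTime hAo (by simpa using hq.1)
  have h2 : 1 < e2 := one_lt_exitTime hBo (by simpa using hq.2)
  have h1' : 0 < f1 := pos_exitTime hAo hp1 _
  have h2' : 0 < f2 := pos_exitTime hBo hp2 _
  have hprod1 : exitTime (A ×ˢ B) p (q - p) = min e1 e2 := by
    rw [exitTime_prod hAc hBc hp1 hp2]
    simp [he1, he2]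
  have hprod2 : exitTime (A ×ˢ B) p (p - q) = min f1 f2 := by
    rw [exitTime_prod hAc hBc hp1 hp2]
    simp [hf1, hf2]
  rw [hilbertDist_eq hp, hilbertDist_eq hp1, hilbertDist_eq hp2, hprod1, hprod2]
  have hFe1 := one_le_Ff h1
  have hFe2 := one_le_Ff h2
  have hGf1 := one_le_Gg h1'
  have hGf2 := one_le_Gg h2'
  have hstep : Ff (min e1 e2) * Gg (min f1 f2) ≤ (Ff e1 * Gg f1) * (Ff e2 * Gg f2) := by
    have hF := Ff_min_le h1 h2
    have hG := Gg_min_le h1' h2'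
    have hFmin := one_le_Ff (lt_min h1 h2)
    have hGmin := one_le_Gg (lt_min h1' h2')
    nlinarith
  have hpos : (0:ℝ) < Ff (min e1 e2) * Gg (min f1 f2) := by
    have := one_le_Ff (lt_min h1 h2)
    have := one_le_Gg (lt_min h1' h2')
    nlinarith
  have hX : (0:ℝ) < Ff e1 * Gg f1 := by nlinarith
  have hY : (0:ℝ) < Ff e2 * Gg f2 := by nlinarith
  calc (1/2) * Real.log (Ff (min e1 e2) * Gg (min f1 f2))
      ≤ (1/2) * Real.log ((Ff e1 * Gg f1) * (Ff e2 * Gg f2)) := by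
        have := Real.log_le_log hpos hstep
        linarith
    _ = (1/2) * Real.log (Ff e1 * Gg f1) + (1/2) * Real.log (Ff e2 * Gg f2) := by
        rw [Real.log_mul hX.ne' hY.ne']; ring

end HilbertAux


/-- `B_A(p₁, εR) × B_B(p₂, (1-ε)R) ⊆ B_{A×B}(p, R)` for `ε ∈ (0,1)`. -/
theorem prod_hilbertBall_subset {n m : ℕ}
    (A : Set (EuclideanSpace ℝ (Fin n))) (B : Set (EuclideanSpace ℝ (Fin m)))
    (hAo : IsOpen A) (hAc : Convex ℝ A) (hAl : LineFree A)
    (hBo : IsOpen B) (hBc : Convex ℝ B) (hBl : LineFree B)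
    (p : EuclideanSpace ℝ (Fin n) × EuclideanSpace ℝ (Fin m))
    (hp : p ∈ A ×ˢ B) (R : ℝ) (hR : 0 < R) (ε : ℝ) (hε : ε ∈ Set.Ioo (0 : ℝ) 1) :
    hilbertBall A p.1 (ε * R) ×ˢ hilbertBall B p.2 ((1 - ε) * R) ⊆
      hilbertBall (A ×ˢ B) p R := by
  rintro q ⟨⟨hq1, hd1⟩, hq2, hd2⟩
  refine ⟨⟨hq1, hq2⟩, ?_⟩
  calc hilbertDist (A ×ˢ B) p q ≤ hilbertDist A p.1 q.1 + hilbertDist B p.2 q.2 :=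
        HilbertAux.hilbertDist_prod_le hAo hAc hBo hBc hp ⟨hq1, hq2⟩
    _ < ε * R + (1 - ε) * R := add_lt_add hd1 hd2
    _ = R := by ring
end
end

section
/- Let A₁,…,A_k be proper open convex sets in R^{n₁},…,R^{n_k} and let p = (p₁,…,p_k) be a point of the product. Let T_pB(1) ⊆ R^{n₁+⋯+n_k} be the unit ball of the Finsler norm F_{A₁×⋯×A_k}(p,·) and T_{pᵢ}B(1) ⊆ R^{nᵢ} the unit ball of F_{Aᵢ}(pᵢ,·). Then (1/k^{n₁+⋯+n_k}) Π_{i=1}^k Leb_{nᵢ}(T_{pᵢ}B(1)) ≤ Leb_{n₁+⋯+n_k}(T_pB(1)) ≤ Π_{i=1}^k Leb_{nᵢ}(T_{pᵢ}B(1)), where Leb_d denotes d-dimensional Lebesgue measure. -/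
open scoped ENNReal
open MeasureTheory

noncomputable section

open scoped Pointwise
section Helpers
variable {V : Type*} [AddCommGroup V] [Module ℝ V]

lemma finsler_nonneg (A : Set V) (p v : V) : 0 ≤ finsler A p v :=
  div_nonneg ENNReal.toReal_nonneg (by norm_num)

lemma exitTime_pos [TopologicalSpace V] [ContinuousAdd V] [ContinuousSMul ℝ V]
    {A : Set V} (hA : IsOpen A) {p : V} (hp : p ∈ A) (v : V) : 0 < exitTime A p v := by
  have hcont : Continuous fun t : ℝ => p + t • v :=
    continuous_const.add (continuous_id.smul continuous_const)
  have hmem : (fun t : ℝ => p + t • v) ⁻¹' A ∈ nhds (0 : ℝ) :=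
    (hA.preimage hcont).mem_nhds (by simp [hp])
  obtain ⟨ε, hε, hball⟩ := Metric.mem_nhds_iff.mp hmem
  have h2 : (ε / 2 : ℝ) ∈ {t : ℝ | 0 < t ∧ p + t • v ∈ A} := by
    refine ⟨by linarith, hball ?_⟩
    simp only [Metric.mem_ball, Real.dist_eq, sub_zero]
    rw [abs_of_pos (by linarith)]; linarith
  calc (0 : ℝ≥0∞) < ENNReal.ofReal (ε / 2) := by simp [hε]
    _ ≤ exitTime A p v := le_biSup (fun t => ENNReal.ofReal t) h2

lemma exitTime_smul_le (A : Set V) (p v : V) {c : ℝ} (hc : 0 < c) :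
    exitTime A p (c • v) ≤ ENNReal.ofReal c⁻¹ * exitTime A p v := by
  refine iSup₂_le fun t ht => ?_
  obtain ⟨ht0, htA⟩ := ht
  rw [smul_smul] at htA
  have h2 : ENNReal.ofReal (t * c) ≤ exitTime A p v :=
    le_biSup (fun s => ENNReal.ofReal s) ⟨mul_pos ht0 hc, htA⟩
  calc ENNReal.ofReal t = ENNReal.ofReal c⁻¹ * ENNReal.ofReal (t * c) := by
        rw [← ENNReal.ofReal_mul (by positivity)]
        congr 1; field_simp
    _ ≤ ENNReal.ofReal c⁻¹ * exitTime A p v := mul_le_mul_right h2 _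

lemma exitTime_smul (A : Set V) (p v : V) {c : ℝ} (hc : 0 < c) :
    exitTime A p (c • v) = ENNReal.ofReal c⁻¹ * exitTime A p v := by
  refine le_antisymm (exitTime_smul_le A p v hc) ?_
  have h := exitTime_smul_le A p (c • v) (inv_pos.mpr hc)
  rw [smul_smul, inv_mul_cancel₀ hc.ne', one_smul, inv_inv] at h
  calc ENNReal.ofReal c⁻¹ * exitTime A p v
      ≤ ENNReal.ofReal c⁻¹ * (ENNReal.ofReal c * exitTime A p (c • v)) := mul_le_mul_right h _
    _ = exitTime A p (c • v) := by
        rw [← mul_assoc, ← ENNReal.ofReal_mul (by positivity), inv_mul_cancel₀ hc.ne',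
          ENNReal.ofReal_one, one_mul]

lemma finsler_smul (A : Set V) (p v : V) {c : ℝ} (hc : 0 < c) :
    finsler A p (c • v) = c * finsler A p v := by
  unfold finsler
  rw [show -(c • v) = c • (-v) by rw [smul_neg], exitTime_smul A p v hc,
    exitTime_smul A p (-v) hc]
  have hne : ENNReal.ofReal c⁻¹ ≠ 0 := by simp [hc]
  have hnt : ENNReal.ofReal c⁻¹ ≠ ⊤ := ENNReal.ofReal_ne_top
  rw [ENNReal.mul_inv (Or.inl hne) (Or.inl hnt), ENNReal.mul_inv (Or.inl hne) (Or.inl hnt),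
    ENNReal.ofReal_inv_of_pos hc, inv_inv, ← mul_add, ENNReal.toReal_mul,
    ENNReal.toReal_ofReal hc.le, mul_div_assoc]

end Helpers
section PiHelpers
variable {k : ℕ} {n : Fin k → ℕ} (A : ∀ i, Set (EuclideanSpace ℝ (Fin (n i))))
  (p v : ∀ i, EuclideanSpace ℝ (Fin (n i)))

lemma exitTime_pi_le (i : Fin k) :
    exitTime (Set.univ.pi A) p v ≤ exitTime (A i) (p i) (v i) := by
  refine iSup₂_le fun t ht => ?_
  obtain ⟨ht0, htA⟩ := ht
  exact le_biSup (fun t => ENNReal.ofReal t) ⟨ht0, htA i (Set.mem_univ i)⟩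

lemma le_exitTime_pi (hconv : ∀ i, Convex ℝ (A i)) (hp : ∀ i, p i ∈ A i) :
    (⨅ i, exitTime (A i) (p i) (v i)) ≤ exitTime (Set.univ.pi A) p v := by
  refine ENNReal.le_of_forall_nnreal_lt fun r hr => ?_
  rcases eq_or_lt_of_le (zero_le : (0 : NNReal) ≤ r) with h0 | hr0
  · simp [← h0]
  have key : ∀ i, p i + (r : ℝ) • v i ∈ A i := by
    intro i
    have h1 : (r : ℝ≥0∞) < exitTime (A i) (p i) (v i) := hr.trans_le (iInf_le _ i)
    simp only [exitTime, lt_iSup_iff, Set.mem_setOf_eq] at h1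
    obtain ⟨t, ⟨ht0, htA⟩, hrt⟩ := h1
    have hrt' : (r : ℝ) < t := by
      have h2 := (ENNReal.lt_ofReal_iff_toReal_lt (a := (r : ℝ≥0∞)) (b := t)
        ENNReal.coe_ne_top).mp hrt
      simpa using h2
    have hb0 : (0:ℝ) ≤ (r : ℝ) / t := by positivity
    have ha0 : (0:ℝ) ≤ 1 - (r : ℝ) / t := by
      have : (r : ℝ) / t < 1 := by rw [div_lt_one ht0]; exact hrt'
      linarith
    have hmem := (hconv i) (hp i) htA ha0 hb0 (by ring)
    have heq : (1 - (r:ℝ)/t) • p i + ((r:ℝ)/t) • (p i + t • v i) = p i + (r:ℝ) • v i := by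
      rw [smul_add, smul_smul, div_mul_cancel₀ _ ht0.ne', ← add_assoc, ← add_smul]
      rw [sub_add_cancel, one_smul]
    rwa [heq] at hmem
  have hmem : (r : ℝ) ∈ {t : ℝ | 0 < t ∧ p + t • v ∈ Set.univ.pi A} :=
    ⟨hr0, fun i _ => key i⟩
  calc (r : ℝ≥0∞) = ENNReal.ofReal (r : ℝ) := (ENNReal.ofReal_coe_nnreal (p := r)).symm
    _ ≤ exitTime (Set.univ.pi A) p v := le_biSup (fun t => ENNReal.ofReal t) hmem

lemma exitTime_pos' {V : Type*} [AddCommGroup V] [Module ℝ V] [TopologicalSpace V]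
    [ContinuousAdd V] [ContinuousSMul ℝ V]
    {A : Set V} (hA : IsOpen A) {p : V} (hp : p ∈ A) (v : V) : 0 < exitTime A p v := by
  have hcont : Continuous fun t : ℝ => p + t • v :=
    continuous_const.add (continuous_id.smul continuous_const)
  have hmem : (fun t : ℝ => p + t • v) ⁻¹' A ∈ nhds (0 : ℝ) :=
    (hA.preimage hcont).mem_nhds (by simp [hp])
  obtain ⟨ε, hε, hball⟩ := Metric.mem_nhds_iff.mp hmem
  have h2 : (ε / 2 : ℝ) ∈ {t : ℝ | 0 < t ∧ p + t • v ∈ A} := by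
    refine ⟨by linarith, hball ?_⟩
    simp only [Metric.mem_ball, Real.dist_eq, sub_zero]
    rw [abs_of_pos (by linarith)]; linarith
  calc (0 : ℝ≥0∞) < ENNReal.ofReal (ε / 2) := by simp [hε]
    _ ≤ exitTime A p v := le_biSup (fun t => ENNReal.ofReal t) h2

lemma finsler_le_finsler_pi (hopen : ∀ i, IsOpen (A i)) (hp : ∀ i, p i ∈ A i) (i : Fin k) :
    finsler (A i) (p i) (v i) ≤ finsler (Set.univ.pi A) p v := by
  have hPo : IsOpen (Set.univ.pi A) := isOpen_set_pi Set.finite_univ fun i _ => hopen i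
  have hPp : p ∈ Set.univ.pi A := fun i _ => hp i
  have e1 : exitTime (Set.univ.pi A) p v ≤ exitTime (A i) (p i) (v i) := exitTime_pi_le A p v i
  have e2 : exitTime (Set.univ.pi A) p (-v) ≤ exitTime (A i) (p i) (-(v i)) :=
    exitTime_pi_le A p (-v) i
  have hne : (exitTime (Set.univ.pi A) p v)⁻¹ + (exitTime (Set.univ.pi A) p (-v))⁻¹ ≠ ⊤ :=
    ENNReal.add_ne_top.mpr ⟨ENNReal.inv_ne_top.mpr (exitTime_pos' hPo hPp v).ne',
      ENNReal.inv_ne_top.mpr (exitTime_pos' hPo hPp (-v)).ne'⟩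
  unfold finsler
  have h := ENNReal.toReal_mono hne (add_le_add (ENNReal.inv_le_inv' e1) (ENNReal.inv_le_inv' e2))
  linarith

lemma finsler_pi_le_sum (hopen : ∀ i, IsOpen (A i)) (hconv : ∀ i, Convex ℝ (A i))
    (hp : ∀ i, p i ∈ A i) :
    finsler (Set.univ.pi A) p v ≤ ∑ i, finsler (A i) (p i) (v i) := by
  have key : ∀ w : ∀ i, EuclideanSpace ℝ (Fin (n i)),
      (exitTime (Set.univ.pi A) p w)⁻¹ ≤ ∑ i, (exitTime (A i) (p i) (w i))⁻¹ := by
    intro w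
    have h1 : (⨅ i, exitTime (A i) (p i) (w i)) ≤ exitTime (Set.univ.pi A) p w :=
      le_exitTime_pi A p w hconv hp
    calc (exitTime (Set.univ.pi A) p w)⁻¹ ≤ (⨅ i, exitTime (A i) (p i) (w i))⁻¹ :=
          ENNReal.inv_le_inv' h1
      _ = ⨆ i, (exitTime (A i) (p i) (w i))⁻¹ := ENNReal.inv_iInf _
      _ ≤ ∑ i, (exitTime (A i) (p i) (w i))⁻¹ := by
          refine iSup_le fun i => ?_
          exact Finset.single_le_sum (f := fun j => (exitTime (A j) (p j) (w j))⁻¹)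
            (fun j _ => zero_le) (Finset.mem_univ i)
  have hle : (exitTime (Set.univ.pi A) p v)⁻¹ + (exitTime (Set.univ.pi A) p (-v))⁻¹ ≤
      ∑ i, ((exitTime (A i) (p i) (v i))⁻¹ + (exitTime (A i) (p i) (-(v i)))⁻¹) := by
    rw [Finset.sum_add_distrib]
    exact add_le_add (key v) (key (-v))
  have hfin : ∀ i : Fin k, (exitTime (A i) (p i) (v i))⁻¹ +
      (exitTime (A i) (p i) (-(v i)))⁻¹ ≠ ⊤ := fun i =>
    ENNReal.add_ne_top.mpr ⟨ENNReal.inv_ne_top.mpr (exitTime_pos' (hopen i) (hp i) _).ne',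
      ENNReal.inv_ne_top.mpr (exitTime_pos' (hopen i) (hp i) _).ne'⟩
  have hsumfin : (∑ i, ((exitTime (A i) (p i) (v i))⁻¹ +
      (exitTime (A i) (p i) (-(v i)))⁻¹)) ≠ ⊤ := by
    rw [← lt_top_iff_ne_top, ENNReal.sum_lt_top]
    exact fun i _ => (hfin i).lt_top
  unfold finsler
  rw [← Finset.sum_div]
  gcongr
  calc ((exitTime (Set.univ.pi A) p v)⁻¹ + (exitTime (Set.univ.pi A) p (-v))⁻¹).toReal
      ≤ (∑ i, ((exitTime (A i) (p i) (v i))⁻¹ +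
          (exitTime (A i) (p i) (-(v i)))⁻¹)).toReal := ENNReal.toReal_mono hsumfin hle
    _ = ∑ i, ((exitTime (A i) (p i) (v i))⁻¹ +
          (exitTime (A i) (p i) (-(v i)))⁻¹).toReal := ENNReal.toReal_sum (fun i _ => hfin i)


end PiHelpers
/-- volume comparison for the unit Finsler balls of a product:
`k^{-(n₁+⋯+n_k)} Π Leb(Bᵢ) ≤ Leb(B) ≤ Π Leb(Bᵢ)`. -/
theorem volume_unit_finsler_ball_pi {k : ℕ} {n : Fin k → ℕ}
    (A : ∀ i, Set (EuclideanSpace ℝ (Fin (n i))))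
    (hopen : ∀ i, IsOpen (A i)) (hconv : ∀ i, Convex ℝ (A i))
    (hline : ∀ i, LineFree (A i))
    (p : ∀ i, EuclideanSpace ℝ (Fin (n i))) (hp : ∀ i, p i ∈ A i) :
    ((k : ℝ≥0∞) ^ (∑ i, n i))⁻¹ *
        ∏ i, volume {v : EuclideanSpace ℝ (Fin (n i)) | finsler (A i) (p i) v < 1} ≤
      volume {v : ∀ i, EuclideanSpace ℝ (Fin (n i)) | finsler (Set.univ.pi A) p v < 1} ∧
    volume {v : ∀ i, EuclideanSpace ℝ (Fin (n i)) | finsler (Set.univ.pi A) p v < 1} ≤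
      ∏ i, volume {v : EuclideanSpace ℝ (Fin (n i)) | finsler (A i) (p i) v < 1} := by
  constructor
  · -- lower bound
    have hsub : Set.univ.pi (fun i => {w : EuclideanSpace ℝ (Fin (n i)) |
        finsler (A i) (p i) w < 1 / (k : ℝ)}) ⊆
        {v : ∀ i, EuclideanSpace ℝ (Fin (n i)) | finsler (Set.univ.pi A) p v < 1} := by
      intro v hv
      have hsum := finsler_pi_le_sum A p v hopen hconv hp
      have hlt : ∑ i, finsler (A i) (p i) (v i) < 1 := by
        rcases Nat.eq_zero_or_pos k with hk | hk
        · subst hk; simp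
        · have hne : (Finset.univ : Finset (Fin k)).Nonempty := by
            simpa using Finset.univ_nonempty_iff.mpr (Fin.pos_iff_nonempty.mp hk)
          calc ∑ i, finsler (A i) (p i) (v i) < ∑ _i : Fin k, 1 / (k : ℝ) :=
                Finset.sum_lt_sum_of_nonempty hne (fun i _ => hv i (Set.mem_univ i))
            _ = 1 := by
                rw [Finset.sum_const, Finset.card_univ, Fintype.card_fin, nsmul_eq_mul]
                field_simp
      exact lt_of_le_of_lt hsum hlt
    have hscale : ∀ i : Fin k, volume {w : EuclideanSpace ℝ (Fin (n i)) |
        finsler (A i) (p i) w < 1 / (k : ℝ)} =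
        ENNReal.ofReal ((k : ℝ)⁻¹ ^ n i) * volume {w : EuclideanSpace ℝ (Fin (n i)) |
          finsler (A i) (p i) w < 1} := by
      intro i
      have hk : 0 < (k : ℝ) := by exact_mod_cast i.pos
      have hset : {w : EuclideanSpace ℝ (Fin (n i)) | finsler (A i) (p i) w < 1 / (k : ℝ)} =
          ((k : ℝ)⁻¹) • {w : EuclideanSpace ℝ (Fin (n i)) | finsler (A i) (p i) w < 1} := by
        ext w
        rw [Set.mem_smul_set_iff_inv_smul_mem₀ (inv_ne_zero hk.ne'), inv_inv,
          Set.mem_setOf_eq, Set.mem_setOf_eq, finsler_smul (A i) (p i) w hk,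
          lt_div_iff₀ hk, mul_comm]
      rw [hset, Measure.addHaar_smul, finrank_euclideanSpace_fin, abs_of_nonneg (by positivity)]
    calc ((k : ℝ≥0∞) ^ (∑ i, n i))⁻¹ *
          ∏ i, volume {v : EuclideanSpace ℝ (Fin (n i)) | finsler (A i) (p i) v < 1}
        = ∏ i, volume {w : EuclideanSpace ℝ (Fin (n i)) |
            finsler (A i) (p i) w < 1 / (k : ℝ)} := by
          rcases Nat.eq_zero_or_pos k with hk | hk
          · subst hk; simp
          · have hk' : 0 < (k : ℝ) := by exact_mod_cast hk
            rw [Finset.prod_congr rfl (fun i _ => hscale i), Finset.prod_mul_distrib,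
              ← ENNReal.ofReal_prod_of_nonneg (fun i _ => by positivity),
              Finset.prod_pow_eq_pow_sum, ENNReal.ofReal_pow (by positivity),
              ENNReal.ofReal_inv_of_pos hk', ENNReal.ofReal_natCast, ENNReal.inv_pow]
      _ = volume (Set.univ.pi (fun i => {w : EuclideanSpace ℝ (Fin (n i)) |
            finsler (A i) (p i) w < 1 / (k : ℝ)})) := (volume_pi_pi _).symm
      _ ≤ volume {v : ∀ i, EuclideanSpace ℝ (Fin (n i)) | finsler (Set.univ.pi A) p v < 1} :=
          measure_mono hsub
  · -- upper bound
    have hsub : {v : ∀ i, EuclideanSpace ℝ (Fin (n i)) | finsler (Set.univ.pi A) p v < 1} ⊆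
        Set.univ.pi (fun i => {w : EuclideanSpace ℝ (Fin (n i)) | finsler (A i) (p i) w < 1}) :=
      fun v hv i _ => lt_of_le_of_lt (finsler_le_finsler_pi A p v hopen hp i) hv
    calc volume {v : ∀ i, EuclideanSpace ℝ (Fin (n i)) | finsler (Set.univ.pi A) p v < 1}
        ≤ volume (Set.univ.pi (fun i => {w : EuclideanSpace ℝ (Fin (n i)) |
            finsler (A i) (p i) w < 1})) := measure_mono hsub
      _ = ∏ i, volume {v : EuclideanSpace ℝ (Fin (n i)) | finsler (A i) (p i) v < 1} :=
          volume_pi_pi _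
end
end

section
/- Let C = (−1,1)^n be the open n-dimensional cube. For every x = (x₁,…,x_n) ∈ C, the Lebesgue volume of the tangent unit ball T_xB(1) = {v ∈ R^n : F_C(x,v) < 1} of the Hilbert–Finsler norm satisfies (2^n/n!) Π_{i=1}^n (1 − xᵢ²) ≤ Leb(T_xB(1)) ≤ 2^n Π_{i=1}^n (1 − xᵢ²). -/
open scoped ENNReal
open MeasureTheory

noncomputable section

/-- The open cube `(-1,1)ⁿ`. -/
def cube (n : ℕ) : Set (EuclideanSpace ℝ (Fin n)) :=
  {x | ∀ i, x i ∈ Set.Ioo (-1 : ℝ) 1}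


section CubeFinslerAux

open scoped ENNReal
open MeasureTheory

noncomputable section

lemma aux_biSup_Ioi : (⨆ t ∈ Set.Ioi (0:ℝ), ENNReal.ofReal t) = ⊤ := by
  rw [eq_top_iff, ← ENNReal.iSup_natCast]
  refine iSup_le fun k => ?_
  have hk : ((k:ℝ)+1) ∈ Set.Ioi (0:ℝ) := Set.mem_Ioi.mpr (by positivity)
  calc (k : ℝ≥0∞) ≤ ENNReal.ofReal ((k:ℝ)+1) := by
        rw [← ENNReal.ofReal_natCast k]
        exact ENNReal.ofReal_le_ofReal (by linarith)
    _ ≤ _ := le_iSup₂ (f := fun (t : ℝ) (_ : t ∈ Set.Ioi (0:ℝ)) => ENNReal.ofReal t) _ hk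

lemma aux_biSup_Ioo {c : ℝ} (hc : 0 < c) :
    (⨆ t ∈ Set.Ioo (0:ℝ) c, ENNReal.ofReal t) = ENNReal.ofReal c := by
  refine le_antisymm (iSup₂_le fun t ht => ENNReal.ofReal_le_ofReal ht.2.le) ?_
  refine ENNReal.le_of_forall_pos_le_add fun ε hε _ => ?_
  have hε' : (0:ℝ) < ε := hε
  set t := max (c/2) (c - ε) with htdef
  have ht : t ∈ Set.Ioo (0:ℝ) c :=
    ⟨lt_of_lt_of_le (half_pos hc) (le_max_left _ _),
     max_lt (half_lt_self hc) (by linarith)⟩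
  calc ENNReal.ofReal c ≤ ENNReal.ofReal (t + ε) :=
        ENNReal.ofReal_le_ofReal (by have := le_max_right (c/2) (c - (ε:ℝ)); linarith)
    _ = ENNReal.ofReal t + ENNReal.ofReal ε := ENNReal.ofReal_add ht.1.le hε'.le
    _ ≤ (⨆ t ∈ Set.Ioo (0:ℝ) c, ENNReal.ofReal t) + ε := by
        gcongr
        · exact le_iSup₂ (f := fun (t : ℝ) (_ : t ∈ Set.Ioo (0:ℝ) c) => ENNReal.ofReal t) _ ht
        · rw [ENNReal.ofReal_coe_nnreal]

variable {n : ℕ}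

/-- Per-coordinate inverse exit rate for the cube. -/
def hdir (x v : EuclideanSpace ℝ (Fin n)) (i : Fin n) : ℝ :=
  max (v i / (1 - x i)) (-(v i) / (1 + x i))

lemma hdir_nonneg {x : EuclideanSpace ℝ (Fin n)} (hx : x ∈ cube n)
    (v : EuclideanSpace ℝ (Fin n)) (i : Fin n) : 0 ≤ hdir x v i := by
  have h1 : 0 < 1 - x i := by have := (hx i).2; linarith
  have h2 : 0 < 1 + x i := by have := (hx i).1; linarith
  rcases le_or_gt 0 (v i) with h | h
  · exact le_max_of_le_left (div_nonneg h h1.le)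
  · exact le_max_of_le_right (div_nonneg (by linarith) h2.le)

lemma mem_cube_iff {x : EuclideanSpace ℝ (Fin n)} (hx : x ∈ cube n)
    (v : EuclideanSpace ℝ (Fin n)) {t : ℝ} (ht : 0 < t) :
    x + t • v ∈ cube n ↔ ∀ i, t * hdir x v i < 1 := by
  unfold cube hdir
  simp only [Set.mem_setOf_eq, Set.mem_Ioo, PiLp.add_apply, PiLp.smul_apply, smul_eq_mul]
  refine forall_congr' fun i => ?_
  have h1 : 0 < 1 - x i := by have := (hx i).2; linarith
  have h2 : 0 < 1 + x i := by have := (hx i).1; linarith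
  have e1 : t * (v i / (1 - x i)) < 1 ↔ x i + t * v i < 1 := by
    rw [← mul_div_assoc, div_lt_one h1]
    constructor <;> intro <;> linarith
  have e2 : t * (-(v i) / (1 + x i)) < 1 ↔ -1 < x i + t * v i := by
    rw [← mul_div_assoc, mul_neg, div_lt_one h2]
    constructor <;> intro <;> linarith
  rw [mul_max_of_nonneg _ _ ht.le, max_lt_iff, e1, e2]
  tauto

lemma exitTime_cube_inv {x : EuclideanSpace ℝ (Fin n)} (hx : x ∈ cube n)
    (v : EuclideanSpace ℝ (Fin n)) :
    (exitTime (cube n) x v)⁻¹ = ⨆ i, ENNReal.ofReal (hdir x v i) := by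
  have hset : {t : ℝ | 0 < t ∧ x + t • v ∈ cube n}
      = {t : ℝ | 0 < t ∧ ∀ i, t * hdir x v i < 1} := by
    ext t; exact and_congr_right fun ht => mem_cube_iff hx v ht
  unfold exitTime
  rw [hset]
  by_cases hz : ∀ i, hdir x v i = 0
  · have hS : {t : ℝ | 0 < t ∧ ∀ i, t * hdir x v i < 1} = Set.Ioi 0 := by
      ext t; simp [Set.mem_Ioi, hz]
    rw [hS, aux_biSup_Ioi]
    simp [hz]
  · push_neg at hz
    obtain ⟨i₀, hi₀⟩ := hz
    have hi₀' : 0 < hdir x v i₀ := (hdir_nonneg hx v i₀).lt_of_ne (Ne.symm hi₀)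
    obtain ⟨j, -, hj⟩ := Finset.exists_max_image Finset.univ (hdir x v) ⟨i₀, Finset.mem_univ _⟩
    have hG : 0 < hdir x v j := lt_of_lt_of_le hi₀' (hj i₀ (Finset.mem_univ _))
    have hS : {t : ℝ | 0 < t ∧ ∀ i, t * hdir x v i < 1} = Set.Ioo 0 (1 / hdir x v j) := by
      ext t
      simp only [Set.mem_setOf_eq, Set.mem_Ioo]
      constructor
      · rintro ⟨ht, h⟩
        exact ⟨ht, (lt_div_iff₀ hG).mpr (h j)⟩
      · rintro ⟨ht, h⟩
        refine ⟨ht, fun i => lt_of_le_of_lt ?_ ((lt_div_iff₀ hG).mp h)⟩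
        exact mul_le_mul_of_nonneg_left (hj i (Finset.mem_univ _)) ht.le
    rw [hS, aux_biSup_Ioo (by positivity), one_div, ENNReal.ofReal_inv_of_pos hG, inv_inv]
    refine le_antisymm (le_iSup (fun i => ENNReal.ofReal (hdir x v i)) j) ?_
    exact iSup_le fun i => ENNReal.ofReal_le_ofReal (hj i (Finset.mem_univ _))

lemma finsler_cube_eq {x : EuclideanSpace ℝ (Fin n)} (hx : x ∈ cube n)
    (v : EuclideanSpace ℝ (Fin n)) :
    finsler (cube n) x v =
      ((⨆ i, ENNReal.ofReal (hdir x v i)) + ⨆ i, ENNReal.ofReal (hdir x (-v) i)).toReal / 2 := by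
  unfold finsler
  rw [exitTime_cube_inv hx v, exitTime_cube_inv hx (-v)]

lemma hdir_add {x : EuclideanSpace ℝ (Fin n)} (hx : x ∈ cube n)
    (v : EuclideanSpace ℝ (Fin n)) (i : Fin n) :
    hdir x v i + hdir x (-v) i = 2 * |v i| / (1 - x i ^ 2) := by
  have h1 : 0 < 1 - x i := by have := (hx i).2; linarith
  have h2 : 0 < 1 + x i := by have := (hx i).1; linarith
  have hsq : 1 - x i ^ 2 = (1 - x i) * (1 + x i) := by ring
  have hne : ((-v : EuclideanSpace ℝ (Fin n)) i) = -(v i) := rfl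
  unfold hdir
  rw [hne, neg_neg]
  rcases le_or_gt 0 (v i) with h | h
  · rw [max_eq_left (by rw [div_le_div_iff₀ h2 h1]; nlinarith),
        max_eq_right (by rw [div_le_div_iff₀ h1 h2]; nlinarith), abs_of_nonneg h, hsq]
    field_simp
    ring
  · rw [max_eq_right (by rw [div_le_div_iff₀ h1 h2]; nlinarith),
        max_eq_left (by rw [div_le_div_iff₀ h2 h1]; nlinarith), abs_of_neg h, hsq]
    field_simp
    ring

lemma iSup_le_sum_ofReal (f : Fin n → ℝ) :
    (⨆ i, ENNReal.ofReal (f i)) ≤ ∑ i, ENNReal.ofReal (f i) :=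
  iSup_le fun i => Finset.single_le_sum (f := fun i => ENNReal.ofReal (f i))
    (fun _ _ => zero_le) (Finset.mem_univ i)

lemma iSup_ofReal_ne_top (f : Fin n → ℝ) :
    (⨆ i, ENNReal.ofReal (f i)) ≠ ⊤ :=
  ne_top_of_le_ne_top (ENNReal.sum_lt_top.mpr fun _ _ => ENNReal.ofReal_lt_top).ne
    (iSup_le_sum_ofReal f)

lemma finsler_lower {x : EuclideanSpace ℝ (Fin n)} (hx : x ∈ cube n)
    (v : EuclideanSpace ℝ (Fin n)) (i : Fin n) :
    |v i| / (1 - x i ^ 2) ≤ finsler (cube n) x v := by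
  rw [finsler_cube_eq hx v]
  have hne : ((⨆ i, ENNReal.ofReal (hdir x v i)) + ⨆ i, ENNReal.ofReal (hdir x (-v) i)) ≠ ⊤ :=
    ENNReal.add_ne_top.mpr ⟨iSup_ofReal_ne_top _, iSup_ofReal_ne_top _⟩
  have key : ENNReal.ofReal (hdir x v i) + ENNReal.ofReal (hdir x (-v) i) ≤
      (⨆ i, ENNReal.ofReal (hdir x v i)) + ⨆ i, ENNReal.ofReal (hdir x (-v) i) :=
    add_le_add (le_iSup (fun i => ENNReal.ofReal (hdir x v i)) i)
      (le_iSup (fun i => ENNReal.ofReal (hdir x (-v) i)) i)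
  have h2 := ENNReal.toReal_mono hne key
  rw [← ENNReal.ofReal_add (hdir_nonneg hx v i) (hdir_nonneg hx (-v) i),
    ENNReal.toReal_ofReal (add_nonneg (hdir_nonneg hx v i) (hdir_nonneg hx (-v) i))] at h2
  have h3 := hdir_add hx v i
  have h4 : 2 * |v i| / (1 - x i ^ 2) = 2 * (|v i| / (1 - x i ^ 2)) := by ring
  linarith

lemma finsler_upper {x : EuclideanSpace ℝ (Fin n)} (hx : x ∈ cube n)
    (v : EuclideanSpace ℝ (Fin n)) :
    finsler (cube n) x v ≤ ∑ i, |v i| / (1 - x i ^ 2) := by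
  rw [finsler_cube_eq hx v]
  have key : ((⨆ i, ENNReal.ofReal (hdir x v i)) + ⨆ i, ENNReal.ofReal (hdir x (-v) i)) ≤
      ENNReal.ofReal (∑ i, (hdir x v i + hdir x (-v) i)) := by
    rw [ENNReal.ofReal_sum_of_nonneg (fun i _ =>
      add_nonneg (hdir_nonneg hx v i) (hdir_nonneg hx (-v) i))]
    simp_rw [ENNReal.ofReal_add (hdir_nonneg hx v _) (hdir_nonneg hx (-v) _)]
    rw [Finset.sum_add_distrib]
    exact add_le_add (iSup_le_sum_ofReal _) (iSup_le_sum_ofReal _)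
  have h2 := ENNReal.toReal_mono ENNReal.ofReal_ne_top key
  rw [ENNReal.toReal_ofReal (Finset.sum_nonneg fun i _ =>
    add_nonneg (hdir_nonneg hx v i) (hdir_nonneg hx (-v) i))] at h2
  have hs : ∑ i, (hdir x v i + hdir x (-v) i) = 2 * ∑ i, |v i| / (1 - x i ^ 2) := by
    rw [Finset.mul_sum]
    refine Finset.sum_congr rfl fun i _ => ?_
    rw [hdir_add hx v i]; ring
  linarith

lemma volume_box (c : Fin n → ℝ) :
    volume {v : EuclideanSpace ℝ (Fin n) | ∀ i, |v i| < c i}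
      = ∏ i, ENNReal.ofReal (2 * c i) := by
  have h : {v : EuclideanSpace ℝ (Fin n) | ∀ i, |v i| < c i} =
      (MeasurableEquiv.toLp 2 (Fin n → ℝ)).symm ⁻¹'
        (Set.univ.pi fun i => Set.Ioo (-(c i)) (c i)) := by
    ext v
    simp [Set.mem_pi, abs_lt]
  rw [h, (EuclideanSpace.volume_preserving_symm_measurableEquiv_toLp (Fin n)).measure_preimage
      (MeasurableSet.univ_pi fun i => measurableSet_Ioo).nullMeasurableSet,
    volume_pi_pi]
  refine Finset.prod_congr rfl fun i _ => ?_
  rw [Real.volume_Ioo]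
  congr 1
  ring

lemma volume_l1ball (c : Fin n → ℝ) (hc : ∀ i, 0 < c i) :
    volume {v : EuclideanSpace ℝ (Fin n) | ∑ i, |v i| / c i < 1}
      = ENNReal.ofReal ((∏ i, c i) * (2 ^ n / n.factorial)) := by
  have h : {v : EuclideanSpace ℝ (Fin n) | ∑ i, |v i| / c i < 1} =
      (MeasurableEquiv.toLp 2 (Fin n → ℝ)).symm ⁻¹'
        {y : Fin n → ℝ | ∑ i, |y i| / c i < 1} := by
    ext v
    simp
  have hmeas : MeasurableSet {y : Fin n → ℝ | ∑ i, |y i| / c i < 1} := by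
    refine measurableSet_lt ?_ measurable_const
    exact Finset.measurable_sum _ fun i _ => ((measurable_pi_apply i).abs).div_const _
  rw [h, (EuclideanSpace.volume_preserving_symm_measurableEquiv_toLp (Fin n)).measure_preimage
      hmeas.nullMeasurableSet]
  set g : (Fin n → ℝ) →ₗ[ℝ] (Fin n → ℝ) := Matrix.toLin' (Matrix.diagonal fun i => (c i)⁻¹)
  have hg : {y : Fin n → ℝ | ∑ i, |y i| / c i < 1}
      = g ⁻¹' {y : Fin n → ℝ | ∑ i, |y i| ^ (1:ℝ) < 1} := by
    ext y
    simp only [Set.mem_preimage, Set.mem_setOf_eq, g, Matrix.toLin'_apply,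
      Matrix.mulVec_diagonal, Real.rpow_one, abs_mul, abs_inv, abs_of_pos (hc _)]
    congr! 2 with i
    rw [inv_mul_eq_div]
  have hdet : LinearMap.det g = ∏ i, (c i)⁻¹ := by
    rw [LinearMap.det_toLin', Matrix.det_diagonal]
  have hp : 0 < ∏ i, (c i)⁻¹ := Finset.prod_pos fun i _ => inv_pos.mpr (hc i)
  have hdet0 : LinearMap.det g ≠ 0 := by rw [hdet]; exact hp.ne'
  rw [hg, MeasureTheory.Measure.addHaar_preimage_linearMap volume hdet0,
    MeasureTheory.volume_sum_rpow_lt_one (Fin n) le_rfl]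
  rw [hdet, ← ENNReal.ofReal_mul (by positivity)]
  congr 1
  have h1 : |(∏ i, (c i)⁻¹)⁻¹| = ∏ i, c i := by
    rw [abs_of_pos (inv_pos.mpr hp), Finset.prod_inv_distrib, inv_inv]
  rw [h1]
  congr 1
  norm_num [Real.Gamma_two, Fintype.card_fin]
  rw [Real.Gamma_nat_eq_factorial]

end

end CubeFinslerAux

/-- `(2ⁿ/n!) Π (1 - xᵢ²) ≤ Leb(T_xB(1)) ≤ 2ⁿ Π (1 - xᵢ²)` for the cube. -/
theorem cube_unit_ball_volume {n : ℕ} (x : EuclideanSpace ℝ (Fin n)) (hx : x ∈ cube n) :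
    2 ^ n / (Nat.factorial n : ℝ) * ∏ i, (1 - x i ^ 2) ≤
        (volume {v : EuclideanSpace ℝ (Fin n) | finsler (cube n) x v < 1}).toReal ∧
      (volume {v : EuclideanSpace ℝ (Fin n) | finsler (cube n) x v < 1}).toReal ≤
        2 ^ n * ∏ i, (1 - x i ^ 2) := by
  have hc : ∀ i, 0 < 1 - x i ^ 2 := fun i => by
    have h1 := (hx i).1; have h2 := (hx i).2; nlinarith
  have hSB : {v : EuclideanSpace ℝ (Fin n) | finsler (cube n) x v < 1} ⊆
      {v : EuclideanSpace ℝ (Fin n) | ∀ i, |v i| < 1 - x i ^ 2} :=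
    fun v hv i => (div_lt_one (hc i)).mp (lt_of_le_of_lt (finsler_lower hx v i) hv)
  have hLS : {v : EuclideanSpace ℝ (Fin n) | ∑ i, |v i| / (1 - x i ^ 2) < 1} ⊆
      {v : EuclideanSpace ℝ (Fin n) | finsler (cube n) x v < 1} :=
    fun v hv => lt_of_le_of_lt (finsler_upper hx v) hv
  have hvolB := volume_box (n := n) (fun i => 1 - x i ^ 2)
  have hvolL := volume_l1ball (n := n) (fun i => 1 - x i ^ 2) hc
  have hBne : (∏ i, ENNReal.ofReal (2 * (1 - x i ^ 2))) ≠ ⊤ :=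
    (ENNReal.prod_lt_top fun i _ => ENNReal.ofReal_lt_top).ne
  have hSle : volume {v : EuclideanSpace ℝ (Fin n) | finsler (cube n) x v < 1} ≤
      ∏ i, ENNReal.ofReal (2 * (1 - x i ^ 2)) := hvolB ▸ measure_mono hSB
  have hSne : volume {v : EuclideanSpace ℝ (Fin n) | finsler (cube n) x v < 1} ≠ ⊤ :=
    ne_top_of_le_ne_top hBne hSle
  constructor
  · have hLle : ENNReal.ofReal ((∏ i, (1 - x i ^ 2)) * (2 ^ n / n.factorial)) ≤
        volume {v : EuclideanSpace ℝ (Fin n) | finsler (cube n) x v < 1} :=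
      hvolL ▸ measure_mono hLS
    have h2 := ENNReal.toReal_mono hSne hLle
    rw [ENNReal.toReal_ofReal (mul_nonneg (Finset.prod_nonneg fun i _ => (hc i).le)
      (by positivity))] at h2
    calc (2:ℝ) ^ n / n.factorial * ∏ i, (1 - x i ^ 2)
        = (∏ i, (1 - x i ^ 2)) * (2 ^ n / n.factorial) := by ring
      _ ≤ _ := h2
  · have h2 := ENNReal.toReal_mono hBne hSle
    have h3 : (∏ i, ENNReal.ofReal (2 * (1 - x i ^ 2))).toReal
        = 2 ^ n * ∏ i, (1 - x i ^ 2) := by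
      rw [ENNReal.toReal_prod,
        Finset.prod_congr rfl (fun i _ => ENNReal.toReal_ofReal
          (by nlinarith [hc i] : (0:ℝ) ≤ 2 * (1 - x i ^ 2))),
        Finset.prod_mul_distrib, Finset.prod_const, Finset.card_univ, Fintype.card_fin]
    rw [h3] at h2
    exact h2
end
end

section
/- The Hilbert geometry of the open square (−1,1)² ⊆ R² is bi-Lipschitz equivalent to the Euclidean plane R²: there exists a bijection Φ : (−1,1)² → R² and a constant L ≥ 1 such that (1/L)·|Φ(p) − Φ(q)| ≤ d_{(−1,1)²}(p,q) ≤ L·|Φ(p) − Φ(q)| for all p, q, where d_{(−1,1)²} is the Hilbert distance of the square. One may take Φ(x,y) = (artanh x, artanh y) and L = 2. -/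
open scoped ENNReal
open MeasureTheory

noncomputable section

/-- The open square `(-1,1)²` in the Euclidean plane. -/
def square : Set (EuclideanSpace ℝ (Fin 2)) :=
  {x | ∀ i, x i ∈ Set.Ioo (-1 : ℝ) 1}

/-- `Φ(x,y) = (artanh x, artanh y)`. -/
def sqMap : EuclideanSpace ℝ (Fin 2) → EuclideanSpace ℝ (Fin 2) :=
  fun x => (WithLp.toLp 2 (fun i => (1 / 2) * Real.log ((1 + x i) / (1 - x i))) : EuclideanSpace ℝ (Fin 2))

namespace SqAux


/-- 1-D exit time of the interval `(-1,1)` from `a` in direction `v`. -/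
noncomputable def e (a v : ℝ) : ℝ≥0∞ :=
  if 0 < v then ENNReal.ofReal ((1 - a) / v)
  else if v < 0 then ENNReal.ofReal ((1 + a) / (-v)) else ∞

lemma e_pos {a : ℝ} (ha : a ∈ Set.Ioo (-1 : ℝ) 1) (v : ℝ) : 0 < e a v := by
  obtain ⟨h1, h2⟩ := ha
  unfold e
  split_ifs with hv hv'
  · exact ENNReal.ofReal_pos.2 (div_pos (by linarith) hv)
  · exact ENNReal.ofReal_pos.2 (div_pos (by linarith) (by linarith))
  · exact ENNReal.zero_lt_top

lemma mem_iff {a : ℝ} (ha : a ∈ Set.Ioo (-1 : ℝ) 1) {t : ℝ} (ht : 0 < t) (v : ℝ) :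
    a + t * v ∈ Set.Ioo (-1 : ℝ) 1 ↔ ENNReal.ofReal t < e a v := by
  obtain ⟨h1, h2⟩ := ha
  unfold e
  split_ifs with hv hv'
  · rw [ENNReal.ofReal_lt_ofReal_iff (div_pos (by linarith) hv)]
    rw [lt_div_iff₀ hv]
    constructor
    · rintro ⟨-, h⟩; nlinarith
    · intro h; refine ⟨by nlinarith, by nlinarith⟩
  · rw [ENNReal.ofReal_lt_ofReal_iff (div_pos (by linarith) (by linarith))]
    rw [lt_div_iff₀ (by linarith)]
    constructor
    · rintro ⟨h, -⟩; nlinarith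
    · intro h; refine ⟨by nlinarith, by nlinarith⟩
  · have hv0 : v = 0 := le_antisymm (not_lt.1 hv) (not_lt.1 hv')
    simp [hv0, lt_top_iff_ne_top, ENNReal.ofReal_ne_top, h1, h2]

lemma sup_eq {T : ℝ≥0∞} (hT : 0 < T) :
    ⨆ t ∈ {t : ℝ | 0 < t ∧ ENNReal.ofReal t < T}, ENNReal.ofReal t = T := by
  apply le_antisymm
  · refine iSup₂_le fun t ht => ht.2.le
  · refine le_of_forall_lt fun b hb => ?_
    obtain ⟨r, hr0, hbr, hrT⟩ := ENNReal.lt_iff_exists_real_btwn.1 hb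
    have hrpos : 0 < r := by
      rcases lt_or_ge 0 r with h | h
      · exact h
      · exfalso; rw [ENNReal.ofReal_eq_zero.2 h] at hbr; exact (not_lt.2 (zero_le (a := b))) hbr
    calc b < ENNReal.ofReal r := hbr
    _ ≤ _ := le_iSup₂ (f := fun t (_ : t ∈ {t : ℝ | 0 < t ∧ ENNReal.ofReal t < T}) =>
        ENNReal.ofReal t) r ⟨hrpos, hrT⟩

lemma exitTime_square {p : EuclideanSpace ℝ (Fin 2)} (hp : p ∈ square)
    (v : EuclideanSpace ℝ (Fin 2)) :
    exitTime square p v = min (e (p 0) (v 0)) (e (p 1) (v 1)) := by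
  have hset : {t : ℝ | 0 < t ∧ p + t • v ∈ square}
      = {t : ℝ | 0 < t ∧ ENNReal.ofReal t < min (e (p 0) (v 0)) (e (p 1) (v 1))} := by
    ext t
    simp only [Set.mem_setOf_eq, and_congr_right_iff, lt_min_iff]
    intro ht
    have : p + t • v ∈ square ↔ ∀ i, p i + t * v i ∈ Set.Ioo (-1 : ℝ) 1 := by
      unfold square
      simp only [Set.mem_setOf_eq, PiLp.add_apply, PiLp.smul_apply, smul_eq_mul]
    rw [this, Fin.forall_fin_two, mem_iff (hp 0) ht, mem_iff (hp 1) ht]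
  rw [exitTime, hset, sup_eq (lt_min (e_pos (hp 0) _) (e_pos (hp 1) _))]




noncomputable def fp (s : ℝ≥0∞) : ℝ := if s = ∞ then 1 else s.toReal / (s.toReal - 1)
noncomputable def fm (s : ℝ≥0∞) : ℝ := if s = ∞ then 1 else (s.toReal + 1) / s.toReal

def Pp (s : ℝ≥0∞) : Prop := s = ∞ ∨ 1 < s.toReal
def Pm (s : ℝ≥0∞) : Prop := s = ∞ ∨ 0 < s.toReal

lemma fp_one_le {s : ℝ≥0∞} (hs : Pp s) : 1 ≤ fp s := by
  unfold fp; rcases hs with h | h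
  · simp [h]
  · have hs' : s ≠ ∞ := by rintro rfl; rw [ENNReal.toReal_top] at h; linarith
    rw [if_neg hs', le_div_iff₀ (by linarith)]; linarith

lemma fm_one_le {s : ℝ≥0∞} (hs : Pm s) : 1 ≤ fm s := by
  unfold fm; rcases hs with h | h
  · simp [h]
  · have hs' : s ≠ ∞ := by rintro rfl; rw [ENNReal.toReal_top] at h; linarith
    rw [if_neg hs', le_div_iff₀ h]; linarith

lemma fp_anti {s s' : ℝ≥0∞} (hss : s ≤ s') (hs : Pp s) (hs' : Pp s') : fp s' ≤ fp s := by
  rcases hs' with h' | h'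
  · rw [fp, if_pos h']; exact fp_one_le hs
  · have hs'top : s' ≠ ∞ := by rintro rfl; rw [ENNReal.toReal_top] at h'; linarith
    have hstop : s ≠ ∞ := fun h => hs'top (top_le_iff.1 (h ▸ hss))
    have hA : 1 < s.toReal := by
      rcases hs with h | h; · exact absurd h hstop
      · exact h
    have hAB : s.toReal ≤ s'.toReal := ENNReal.toReal_mono hs'top hss
    rw [fp, fp, if_neg hstop, if_neg hs'top,
      div_le_div_iff₀ (by linarith) (by linarith)]
    nlinarith

lemma fm_anti {s s' : ℝ≥0∞} (hss : s ≤ s') (hs : Pm s) (hs' : Pm s') : fm s' ≤ fm s := by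
  rcases hs' with h' | h'
  · rw [fm, if_pos h']; exact fm_one_le hs
  · have hs'top : s' ≠ ∞ := by rintro rfl; rw [ENNReal.toReal_top] at h'; linarith
    have hstop : s ≠ ∞ := fun h => hs'top (top_le_iff.1 (h ▸ hss))
    have hA : 0 < s.toReal := by
      rcases hs with h | h; · exact absurd h hstop
      · exact h
    have hAB : s.toReal ≤ s'.toReal := ENNReal.toReal_mono hs'top hss
    rw [fm, fm, if_neg hstop, if_neg hs'top,
      div_le_div_iff₀ (by linarith) (by linarith)]
    nlinarith

/-- artanh -/
noncomputable def atnh (x : ℝ) : ℝ := (1 / 2) * Real.log ((1 + x) / (1 - x))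

lemma e_zero (a : ℝ) : e a 0 = ∞ := by
  rw [e, if_neg (lt_irrefl 0), if_neg (lt_irrefl 0)]

lemma Pp_e {x y : ℝ} (hx : x ∈ Set.Ioo (-1 : ℝ) 1) (hy : y ∈ Set.Ioo (-1 : ℝ) 1) :
    Pp (e x (y - x)) := by
  obtain ⟨hx1, hx2⟩ := hx; obtain ⟨hy1, hy2⟩ := hy
  unfold e
  rcases lt_trichotomy x y with h | h | h
  · rw [if_pos (by linarith)]
    right
    rw [ENNReal.toReal_ofReal (le_of_lt (div_pos (by linarith) (by linarith))),
      lt_div_iff₀ (by linarith)]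
    linarith
  · subst h; simp only [sub_self, lt_irrefl, if_neg, if_false]
    exact Or.inl rfl
  · rw [if_neg (by linarith), if_pos (by linarith)]
    right
    rw [ENNReal.toReal_ofReal (le_of_lt (div_pos (by linarith) (by linarith))),
      lt_div_iff₀ (by linarith)]
    linarith

lemma Pm_e {x y : ℝ} (hx : x ∈ Set.Ioo (-1 : ℝ) 1) (hy : y ∈ Set.Ioo (-1 : ℝ) 1) :
    Pm (e x (x - y)) := by
  obtain ⟨hx1, hx2⟩ := hx; obtain ⟨hy1, hy2⟩ := hy
  unfold e
  rcases lt_trichotomy x y with h | h | h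
  · rw [if_neg (by linarith), if_pos (by linarith)]
    right
    rw [ENNReal.toReal_ofReal (le_of_lt (div_pos (by linarith) (by linarith)))]
    exact div_pos (by linarith) (by linarith)
  · subst h; simp only [sub_self, lt_irrefl, if_neg, if_false]
    exact Or.inl rfl
  · rw [if_pos (by linarith)]
    right
    rw [ENNReal.toReal_ofReal (le_of_lt (div_pos (by linarith) (by linarith)))]
    exact div_pos (by linarith) (by linarith)

lemma atnh_strictMono {x y : ℝ} (hx : x ∈ Set.Ioo (-1 : ℝ) 1) (hy : y ∈ Set.Ioo (-1 : ℝ) 1)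
    (h : x < y) : atnh x < atnh y := by
  obtain ⟨hx1, hx2⟩ := hx; obtain ⟨hy1, hy2⟩ := hy
  unfold atnh
  have h1 : (0:ℝ) < (1 + x) / (1 - x) := div_pos (by linarith) (by linarith)
  have h2 : (1 + x) / (1 - x) < (1 + y) / (1 - y) := by
    rw [div_lt_div_iff₀ (by linarith) (by linarith)]; nlinarith
  have := Real.log_lt_log h1 h2
  linarith

lemma prod_eq {x y : ℝ} (hx : x ∈ Set.Ioo (-1 : ℝ) 1) (hy : y ∈ Set.Ioo (-1 : ℝ) 1) :
    (1 / 2) * Real.log (fp (e x (y - x)) * fm (e x (x - y))) = |atnh y - atnh x| := by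
  have hx1 := hx.1; have hx2 := hx.2; have hy1 := hy.1; have hy2 := hy.2
  rcases lt_trichotomy x y with h | h | h
  · -- x < y
    have hv : (0:ℝ) < y - x := by linarith
    have hA : e x (y - x) = ENNReal.ofReal ((1 - x) / (y - x)) := by rw [e, if_pos hv]
    have hB : e x (x - y) = ENNReal.ofReal ((1 + x) / (y - x)) := by
      rw [e, if_neg (by linarith), if_pos (by linarith)]; congr 1; ring
    have hAfin : e x (y - x) ≠ ∞ := by rw [hA]; exact ENNReal.ofReal_ne_top
    have hBfin : e x (x - y) ≠ ∞ := by rw [hB]; exact ENNReal.ofReal_ne_top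
    have hAval : (e x (y - x)).toReal = (1 - x) / (y - x) := by
      rw [hA, ENNReal.toReal_ofReal (le_of_lt (div_pos (by linarith) hv))]
    have hBval : (e x (x - y)).toReal = (1 + x) / (y - x) := by
      rw [hB, ENNReal.toReal_ofReal (le_of_lt (div_pos (by linarith) hv))]
    have hAm1 : (0:ℝ) < (1 - x) / (y - x) - 1 := by
      rw [sub_pos, lt_div_iff₀ hv]; linarith
    have hfp : fp (e x (y - x)) = (1 - x) / (1 - y) := by
      rw [fp, if_neg hAfin, hAval,
        div_eq_div_iff (ne_of_gt hAm1) (by linarith : (1:ℝ) - y ≠ 0)]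
      field_simp
      try ring
      try tauto
    have hfm : fm (e x (x - y)) = (1 + y) / (1 + x) := by
      rw [fm, if_neg hBfin, hBval,
        div_eq_div_iff (ne_of_gt (div_pos (by linarith) hv) : (1 + x) / (y - x) ≠ 0)
          (by linarith : (1:ℝ) + x ≠ 0)]
      field_simp
      try ring
      try tauto
    rw [hfp, hfm]
    have hprod : (1 - x) / (1 - y) * ((1 + y) / (1 + x))
        = ((1 + y) / (1 - y)) / ((1 + x) / (1 - x)) := by
      field_simp
      try ring
      try tauto
    rw [hprod, Real.log_div (ne_of_gt (div_pos (by linarith) (by linarith)))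
      (ne_of_gt (div_pos (by linarith) (by linarith))),
      abs_of_pos (by linarith [atnh_strictMono hx hy h] : (0:ℝ) < atnh y - atnh x)]
    unfold atnh; ring
  · subst h
    simp only [sub_self]
    rw [e_zero, fp, fm, if_pos rfl, if_pos rfl]
    simp
  · -- y < x
    have hxy : (0:ℝ) < x - y := by linarith
    have hA : e x (y - x) = ENNReal.ofReal ((1 + x) / (x - y)) := by
      rw [e, if_neg (by linarith), if_pos (by linarith : y - x < 0)]; congr 1; ring
    have hB : e x (x - y) = ENNReal.ofReal ((1 - x) / (x - y)) := by
      rw [e, if_pos hxy]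
    have hAfin : e x (y - x) ≠ ∞ := by rw [hA]; exact ENNReal.ofReal_ne_top
    have hBfin : e x (x - y) ≠ ∞ := by rw [hB]; exact ENNReal.ofReal_ne_top
    have hAval : (e x (y - x)).toReal = (1 + x) / (x - y) := by
      rw [hA, ENNReal.toReal_ofReal (le_of_lt (div_pos (by linarith) hxy))]
    have hBval : (e x (x - y)).toReal = (1 - x) / (x - y) := by
      rw [hB, ENNReal.toReal_ofReal (le_of_lt (div_pos (by linarith) hxy))]
    have hAm1 : (0:ℝ) < (1 + x) / (x - y) - 1 := by
      rw [sub_pos, lt_div_iff₀ hxy]; linarith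
    have hfp : fp (e x (y - x)) = (1 + x) / (1 + y) := by
      rw [fp, if_neg hAfin, hAval,
        div_eq_div_iff (ne_of_gt hAm1) (by linarith : (1:ℝ) + y ≠ 0)]
      field_simp
      try ring
      try tauto
    have hfm : fm (e x (x - y)) = (1 - y) / (1 - x) := by
      rw [fm, if_neg hBfin, hBval,
        div_eq_div_iff (ne_of_gt (div_pos (by linarith) hxy) : (1 - x) / (x - y) ≠ 0)
          (by linarith : (1:ℝ) - x ≠ 0)]
      field_simp
      try ring
      try tauto
    rw [hfp, hfm]
    have hprod : (1 + x) / (1 + y) * ((1 - y) / (1 - x))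
        = ((1 + x) / (1 - x)) / ((1 + y) / (1 - y)) := by
      field_simp
      try ring
      try tauto
    rw [hprod, Real.log_div (ne_of_gt (div_pos (by linarith) (by linarith)))
      (ne_of_gt (div_pos (by linarith) (by linarith))),
      abs_of_neg (by linarith [atnh_strictMono hy hx h] : atnh y - atnh x < 0)]
    unfold atnh; ring


noncomputable def itnh (t : ℝ) : ℝ := (Real.exp (2 * t) - 1) / (Real.exp (2 * t) + 1)

lemma itnh_mem (t : ℝ) : itnh t ∈ Set.Ioo (-1 : ℝ) 1 := by
  have hE : 0 < Real.exp (2 * t) := Real.exp_pos _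
  constructor
  · rw [itnh, lt_div_iff₀ (by linarith)]; linarith
  · rw [itnh, div_lt_one (by linarith)]; linarith

lemma atnh_itnh (t : ℝ) : atnh (itnh t) = t := by
  have hE : 0 < Real.exp (2 * t) := Real.exp_pos _
  rw [atnh]
  have h1 : 1 + itnh t = 2 * Real.exp (2 * t) / (Real.exp (2 * t) + 1) := by
    rw [itnh]; field_simp; ring
  have h2 : 1 - itnh t = 2 / (Real.exp (2 * t) + 1) := by
    rw [itnh]; field_simp; ring
  rw [h1, h2]
  have h3 : 2 * Real.exp (2 * t) / (Real.exp (2 * t) + 1) / (2 / (Real.exp (2 * t) + 1))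
      = Real.exp (2 * t) := by
    field_simp
  rw [h3, Real.log_exp]; ring

lemma itnh_atnh {x : ℝ} (hx : x ∈ Set.Ioo (-1 : ℝ) 1) : itnh (atnh x) = x := by
  obtain ⟨h1, h2⟩ := hx
  have hpos : 0 < (1 + x) / (1 - x) := div_pos (by linarith) (by linarith)
  have hexp : Real.exp (2 * atnh x) = (1 + x) / (1 - x) := by
    rw [atnh, show 2 * (1 / 2 * Real.log ((1 + x) / (1 - x))) = Real.log ((1 + x) / (1 - x))
      by ring]
    exact Real.exp_log hpos
  have hne : (1 : ℝ) - x ≠ 0 := by linarith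
  rw [itnh, hexp]
  have hnum : (1 + x) / (1 - x) - 1 = 2 * x / (1 - x) := by
    field_simp
    ring
  have hden : (1 + x) / (1 - x) + 1 = 2 / (1 - x) := by
    field_simp
    ring
  rw [hnum, hden]
  rw [div_div_div_cancel_right₀]
  · ring
  · exact hne

lemma sandwich {A0 A1 B0 B1 : ℝ≥0∞} (hA0 : Pp A0) (hA1 : Pp A1) (hB0 : Pm B0) (hB1 : Pm B1) :
    (1 / 2) * Real.log (fp A0 * fm B0)
        ≤ (1 / 2) * Real.log (fp (min A0 A1) * fm (min B0 B1)) ∧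
    (1 / 2) * Real.log (fp A1 * fm B1)
        ≤ (1 / 2) * Real.log (fp (min A0 A1) * fm (min B0 B1)) ∧
    (1 / 2) * Real.log (fp (min A0 A1) * fm (min B0 B1))
        ≤ (1 / 2) * Real.log (fp A0 * fm B0) + (1 / 2) * Real.log (fp A1 * fm B1) := by
  have hPmin : Pp (min A0 A1) := by rcases min_choice A0 A1 with h | h <;> rw [h] <;> assumption
  have hPmin' : Pm (min B0 B1) := by rcases min_choice B0 B1 with h | h <;> rw [h] <;> assumption
  have h1A0 := fp_one_le hA0; have h1A1 := fp_one_le hA1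
  have h1B0 := fm_one_le hB0; have h1B1 := fm_one_le hB1
  have h1m := fp_one_le hPmin; have h1m' := fm_one_le hPmin'
  have ha0 := fp_anti (min_le_left A0 A1) hPmin hA0
  have ha1 := fp_anti (min_le_right A0 A1) hPmin hA1
  have hb0 := fm_anti (min_le_left B0 B1) hPmin' hB0
  have hb1 := fm_anti (min_le_right B0 B1) hPmin' hB1
  refine ⟨?_, ?_, ?_⟩
  · have := Real.log_le_log (by nlinarith)
      (by nlinarith : fp A0 * fm B0 ≤ fp (min A0 A1) * fm (min B0 B1))
    linarith
  · have := Real.log_le_log (by nlinarith)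
      (by nlinarith : fp A1 * fm B1 ≤ fp (min A0 A1) * fm (min B0 B1))
    linarith
  · have hpmin : fp (min A0 A1) ≤ fp A0 * fp A1 := by
      rcases min_choice A0 A1 with h | h <;> rw [h] <;> nlinarith
    have hmmin : fm (min B0 B1) ≤ fm B0 * fm B1 := by
      rcases min_choice B0 B1 with h | h <;> rw [h] <;> nlinarith
    have hmin : fp (min A0 A1) * fm (min B0 B1)
        ≤ fp A0 * fm B0 * (fp A1 * fm B1) := by nlinarith
    have hl := Real.log_le_log (by nlinarith) hmin
    have hsplit : Real.log (fp A0 * fm B0 * (fp A1 * fm B1))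
        = Real.log (fp A0 * fm B0) + Real.log (fp A1 * fm B1) :=
      Real.log_mul (by nlinarith) (by nlinarith)
    rw [hsplit] at hl
    linarith

lemma hilbert_eq {V : Type*} [AddCommGroup V] [Module ℝ V] (A : Set V) {p q : V}
    (hpq : p ≠ q) :
    hilbertDist A p q
      = (1 / 2) * Real.log (fp (exitTime A p (q - p)) * fm (exitTime A p (p - q))) := by
  by_cases h1 : exitTime A p (q - p) = ∞ <;> by_cases h2 : exitTime A p (p - q) = ∞ <;>
    · rw [hilbertDist, if_neg hpq]
      unfold fp fm
      simp [h1, h2]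

end SqAux

/-- the Hilbert geometry of the open square is bi-Lipschitz equivalent to
the Euclidean plane: `Φ = (artanh, artanh)` is a bijection from the square onto `ℝ²` with
`(1/2)·|Φp − Φq| ≤ d(p,q) ≤ 2·|Φp − Φq|`. -/
theorem square_biLipschitz_plane :
    Set.BijOn sqMap square Set.univ ∧
      ∀ p ∈ square, ∀ q ∈ square,
        (1 / 2) * ‖sqMap p - sqMap q‖ ≤ hilbertDist square p q ∧
          hilbertDist square p q ≤ 2 * ‖sqMap p - sqMap q‖ := by
  constructor
  · -- bijectivity
    refine ⟨fun x _ => Set.mem_univ _, ?_, ?_⟩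
    · intro p hp q hq h
      ext i
      have h1 : SqAux.atnh (p i) = SqAux.atnh (q i) := congrArg (fun z => z i) h
      have h2 := congrArg SqAux.itnh h1
      rwa [SqAux.itnh_atnh (hp i), SqAux.itnh_atnh (hq i)] at h2
    · intro y _
      refine ⟨(WithLp.toLp 2 (fun i => SqAux.itnh (y i)) : EuclideanSpace ℝ (Fin 2)),
        fun i => SqAux.itnh_mem (y i), ?_⟩
      ext i
      exact SqAux.atnh_itnh (y i)
  · intro p hp q hq
    have hp0 := hp 0; have hp1 := hp 1; have hq0 := hq 0; have hq1 := hq 1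
    have hu0 : (sqMap p - sqMap q) 0 = SqAux.atnh (p 0) - SqAux.atnh (q 0) := by
      rw [PiLp.sub_apply]; rfl
    have hu1 : (sqMap p - sqMap q) 1 = SqAux.atnh (p 1) - SqAux.atnh (q 1) := by
      rw [PiLp.sub_apply]; rfl
    have hnorm : ‖sqMap p - sqMap q‖
        = Real.sqrt ((SqAux.atnh (p 0) - SqAux.atnh (q 0)) ^ 2
            + (SqAux.atnh (p 1) - SqAux.atnh (q 1)) ^ 2) := by
      rw [EuclideanSpace.norm_eq, Fin.sum_univ_two, hu0, hu1, Real.norm_eq_abs,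
        Real.norm_eq_abs, sq_abs, sq_abs]
    by_cases hpq : p = q
    · subst hpq
      rw [hilbertDist, if_pos rfl]
      simp
    · have hdist := SqAux.hilbert_eq square hpq
      rw [SqAux.exitTime_square hp (q - p), SqAux.exitTime_square hp (p - q)] at hdist
      simp only [PiLp.sub_apply] at hdist
      obtain ⟨hs0, hs1, hs2⟩ := SqAux.sandwich (SqAux.Pp_e hp0 hq0) (SqAux.Pp_e hp1 hq1)
        (SqAux.Pm_e hp0 hq0) (SqAux.Pm_e hp1 hq1)
      rw [SqAux.prod_eq hp0 hq0] at hs0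
      rw [SqAux.prod_eq hp1 hq1] at hs1
      rw [SqAux.prod_eq hp0 hq0, SqAux.prod_eq hp1 hq1] at hs2
      rw [← hdist] at hs0 hs1 hs2
      rw [hnorm]
      set a := SqAux.atnh (p 0) - SqAux.atnh (q 0) with ha
      set b := SqAux.atnh (p 1) - SqAux.atnh (q 1) with hb
      have habs0 : |SqAux.atnh (q 0) - SqAux.atnh (p 0)| = |a| := by
        rw [ha, abs_sub_comm]
      have habs1 : |SqAux.atnh (q 1) - SqAux.atnh (p 1)| = |b| := by
        rw [hb, abs_sub_comm]
      rw [habs0] at hs0 hs2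
      rw [habs1] at hs1 hs2
      have hane := abs_nonneg a; have hbne := abs_nonneg b
      have hsa := sq_abs a; have hsb := sq_abs b
      constructor
      · have h1 : Real.sqrt (a ^ 2 + b ^ 2) ≤ |a| + |b| := by
          have h2 : Real.sqrt (a ^ 2 + b ^ 2) ≤ Real.sqrt ((|a| + |b|) ^ 2) :=
            Real.sqrt_le_sqrt (by nlinarith [mul_nonneg hane hbne])
          rwa [Real.sqrt_sq (by positivity)] at h2
        linarith
      · have h2 : |a| ≤ Real.sqrt (a ^ 2 + b ^ 2) := by
          rw [← Real.sqrt_sq_eq_abs]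
          exact Real.sqrt_le_sqrt (by nlinarith)
        have h3 : |b| ≤ Real.sqrt (a ^ 2 + b ^ 2) := by
          rw [← Real.sqrt_sq_eq_abs]
          exact Real.sqrt_le_sqrt (by nlinarith)
        linarith
end
end
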